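/- Let k ≥ 1 and ℓ ≥ 0 be integers, let (E, t, peb) be a reachable configuration of the (k,ℓ)-pebble game on a finite vertex set V, and let e ⊆ V be a nonempty set such that the hypergraph (V, E ⊎ {e}) is (k,ℓ)-sparse. If Σ_{v∈e} peb(v) ≤ ℓ, then there is a configuration (E, t', peb') obtainable from (E, t, peb) by pebble-shift moves only such that peb'(v) ≥ peb(v) for every v ∈ e and Σ_{v∈e} peb'(v) = Σ_{v∈e} peb(v) + 1; i.e., a pebble not on e can be brought to an end of e without removing any pebble already on e. -/
import Mathlib


/-- The number of edges of the multiset `E` spanned by the vertex set `W`. -/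
def spanCount {V : Type*} [DecidableEq V] (E : Multiset (Finset V)) (W : Finset V) : ℕ :=
  (E.filter fun e => e ⊆ W).card

/-- A hypergraph with edge multiset `E` is `(k,ℓ)`-sparse if every vertex subset spanning
at least one edge spans at most `k|W| - ℓ` edges. -/
def Sparse {V : Type*} [DecidableEq V] (k l : ℕ) (E : Multiset (Finset V)) : Prop :=
  ∀ W : Finset V, 1 ≤ spanCount E W → spanCount E W + l ≤ k * W.card

/-- Reachable configurations of the `(k,ℓ)`-pebble game on the vertex type `V`.
A configuration is a multiset `D` of oriented edges (an edge together with its tail)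
and a pebble function `peb`.  The initial configuration has no edges and `k` pebbles on
each vertex.  The moves are the add-edge move (an edge with at least `ℓ+1` pebbles on its
ends may be added, picking up a pebble from its chosen tail) and the pebble-shift move
(a pebble on an end `v` of an edge with tail `w` may be moved to `w`, making `v` the new
tail). -/
inductive PebbleReach {V : Type*} [DecidableEq V] (k l : ℕ) :
    Multiset (Finset V × V) → (V → ℕ) → Prop
  | init : PebbleReach k l 0 (fun _ => k)
  | addEdge {D : Multiset (Finset V × V)} {peb : V → ℕ} (e : Finset V) (v : V) :
      PebbleReach k l D peb → e.Nonempty → v ∈ e →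
      l + 1 ≤ ∑ u ∈ e, peb u → 1 ≤ peb v →
      PebbleReach k l ((e, v) ::ₘ D) (Function.update peb v (peb v - 1))
  | shift {D : Multiset (Finset V × V)} {peb : V → ℕ} (e : Finset V) (w v : V) :
      PebbleReach k l D peb → (e, w) ∈ D → v ∈ e → 1 ≤ peb v →
      PebbleReach k l ((e, v) ::ₘ D.erase (e, w))
        (Function.update (Function.update peb v (peb v - 1)) w
          (Function.update peb v (peb v - 1) w + 1))

/-- A single pebble-shift move between configurations of the pebble game. -/
def ShiftStep {V : Type*} [DecidableEq V]
    (c c' : Multiset (Finset V × V) × (V → ℕ)) : Prop :=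
  ∃ (e : Finset V) (w v : V), (e, w) ∈ c.1 ∧ v ∈ e ∧ 1 ≤ c.2 v ∧
    c'.1 = (e, v) ::ₘ c.1.erase (e, w) ∧
    c'.2 = Function.update (Function.update c.2 v (c.2 v - 1)) w
      (Function.update c.2 v (c.2 v - 1) w + 1)

/-- Vertices reachable from `e` by following edges backwards from their tails,
using each edge copy at most once along the chain. -/
inductive PathTo {V : Type*} [DecidableEq V] (e : Finset V) :
    Multiset (Finset V × V) → V → Prop
  | base {D : Multiset (Finset V × V)} {u : V} : u ∈ e → PathTo e D u
  | step {D : Multiset (Finset V × V)} {f : Finset V} {w u : V} :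
      (f, w) ∈ D → u ∈ f → u ∉ e → PathTo e (D.erase (f, w)) w → PathTo e D u

theorem pathTo_mono {V : Type*} [DecidableEq V] {e : Finset V}
    {D : Multiset (Finset V × V)} {u : V} (h : PathTo e D u)
    {D' : Multiset (Finset V × V)} (hle : D ≤ D') : PathTo e D' u := by
  induction h generalizing D' with
  | base hu => exact PathTo.base hu
  | step hmem huf hue _ ih =>
    exact PathTo.step (Multiset.mem_of_le hle hmem) huf hue
      (ih (Multiset.erase_le_erase _ hle))

theorem pathTo_erase {V : Type*} [DecidableEq V] {e : Finset V}
    {D : Multiset (Finset V × V)} {x : V} (h : PathTo e D x)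
    (f : Finset V) (w : V) :
    PathTo e (D.erase (f, w)) x ∨ PathTo e (D.erase (f, w)) w := by
  induction h with
  | base hu => exact Or.inl (PathTo.base hu)
  | @step D' f' w' u hmem huf hue hp ih =>
    rcases ih with h1 | h2
    · by_cases hfw : (f', w') = (f, w)
      · obtain ⟨hf, hw⟩ := Prod.mk.inj hfw
        subst hf; subst hw
        exact Or.inr (pathTo_mono h1 (Multiset.erase_le _ _))
      · refine Or.inl (PathTo.step (w := w') ?_ huf hue ?_)
        · exact (Multiset.mem_erase_of_ne hfw).mpr hmem
        · rw [Multiset.erase_comm]; exact h1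
    · exact Or.inr (pathTo_mono h2 (Multiset.erase_le_erase _ (Multiset.erase_le _ _)))

theorem pathTo_closure {V : Type*} [DecidableEq V] {e : Finset V}
    {D : Multiset (Finset V × V)} {f : Finset V} {w u : V}
    (hw : PathTo e D w) (hmem : (f, w) ∈ D) (huf : u ∈ f) : PathTo e D u := by
  by_cases hue : u ∈ e
  · exact PathTo.base hue
  · rcases pathTo_erase hw f w with h | h
    · exact PathTo.step hmem huf hue h
    · exact PathTo.step hmem huf hue h

theorem tail_mem {V : Type*} [DecidableEq V] {k l : ℕ}
    {D : Multiset (Finset V × V)} {peb : V → ℕ} (h : PebbleReach k l D peb) :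
    ∀ p ∈ D, p.2 ∈ p.1 := by
  induction h with
  | init => simp
  | addEdge f v _ _ hv _ _ ih =>
    intro p hp
    rcases Multiset.mem_cons.mp hp with rfl | hp
    · exact hv
    · exact ih p hp
  | shift f w v _ hfw hv _ ih =>
    intro p hp
    rcases Multiset.mem_cons.mp hp with rfl | hp
    · exact hv
    · exact ih p (Multiset.mem_of_le (Multiset.erase_le _ _) hp)

theorem peb_count {V : Type*} [DecidableEq V] {k l : ℕ}
    {D : Multiset (Finset V × V)} {peb : V → ℕ} (h : PebbleReach k l D peb) :
    ∀ u : V, peb u + (D.filter fun p => p.2 = u).card = k := by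
  induction h with
  | init => simp
  | @addEdge D peb f v _ _ hv _ hpv ih =>
    intro u
    have ihu := ih u
    have hcons : (Multiset.filter (fun p => p.2 = u) ((f, v) ::ₘ D)).card
        = (if v = u then 1 else 0) + (Multiset.filter (fun p => p.2 = u) D).card := by
      rw [Multiset.filter_cons]
      by_cases h : v = u <;> simp [h, Nat.add_comm]
    rw [hcons, Function.update_apply]
    by_cases huv : u = v
    · subst huv
      rw [if_pos rfl, if_pos rfl]
      omega
    · rw [if_neg huv, if_neg (fun h => huv h.symm)]
      omega
  | @shift D peb f w v _ hfw hvf hpv ih =>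
    intro u
    have ihu := ih u
    have hsplit : (Multiset.filter (fun p => p.2 = u) D).card
        = (if w = u then 1 else 0)
          + (Multiset.filter (fun p => p.2 = u) (D.erase (f, w))).card := by
      conv_lhs => rw [← Multiset.cons_erase hfw]
      rw [Multiset.filter_cons]
      by_cases h : w = u <;> simp [h, Nat.add_comm]
    rw [hsplit] at ihu
    have hcons : (Multiset.filter (fun p => p.2 = u) ((f, v) ::ₘ D.erase (f, w))).card
        = (if v = u then 1 else 0)
          + (Multiset.filter (fun p => p.2 = u) (D.erase (f, w))).card := by
      rw [Multiset.filter_cons]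
      by_cases h : v = u <;> simp [h, Nat.add_comm]
    rw [hcons]
    simp only [Function.update_apply]
    by_cases huw : u = w <;> by_cases huv : u = v
    · rw [← huw] at ihu ⊢
      rw [← huv]
      rw [← huv] at hpv
      simp at ihu ⊢
      omega
    · rw [← huw] at ihu ⊢
      simp [huv, Ne.symm huv] at ihu ⊢
      omega
    · rw [← huv]
      rw [← huv] at hpv
      simp [huw, Ne.symm huw] at ihu ⊢
      omega
    · simp [huw, huv, Ne.symm huw, Ne.symm huv] at ihu ⊢
      omega

theorem card_filter_tail {V : Type*} [DecidableEq V]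
    (D : Multiset (Finset V × V)) (R : Finset V) :
    (D.filter fun p => p.2 ∈ R).card = ∑ v ∈ R, (D.filter fun p => p.2 = v).card := by
  induction D using Multiset.induction_on with
  | empty => simp
  | cons a D ih =>
    simp only [Multiset.filter_cons, Multiset.card_add, ih]
    rw [Finset.sum_add_distrib]
    have : ∑ v ∈ R, (if a.2 = v then ({a} : Multiset (Finset V × V)) else 0).card
        = if a.2 ∈ R then 1 else 0 := by
      rw [← Finset.sum_ite_eq R a.2 (fun _ => 1)]
      apply Finset.sum_congr rfl
      intro v _
      by_cases h : a.2 = v <;> simp [h]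
    rw [this]
    by_cases h : a.2 ∈ R <;> simp [h] <;> omega

/-- Moving a pebble along a path to `e` by shift moves. -/
theorem shift_chain {V : Type*} [DecidableEq V] {e : Finset V}
    {D₀ : Multiset (Finset V × V)} {u : V} (h : PathTo e D₀ u) :
    ∀ (D : Multiset (Finset V × V)) (peb : V → ℕ), D₀ ≤ D → 1 ≤ peb u →
    ∃ (D' : Multiset (Finset V × V)) (peb' : V → ℕ),
      Relation.ReflTransGen ShiftStep (D, peb) (D', peb') ∧
      D'.map Prod.fst = D.map Prod.fst ∧
      (∀ v ∈ e, peb v ≤ peb' v) ∧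
      (∑ v ∈ e, peb' v) = (∑ v ∈ e, peb v) + (if u ∈ e then 0 else 1) := by
  induction h with
  | @base D₀ u hu =>
    intro D peb _ _
    exact ⟨D, peb, Relation.ReflTransGen.refl, rfl, fun v _ => le_rfl, by simp [hu]⟩
  | @step D₀ f w u hmem huf hue _ ih =>
    intro D peb hle hpu
    have hfwD : (f, w) ∈ D := Multiset.mem_of_le hle hmem
    set peb₁ : V → ℕ := Function.update (Function.update peb u (peb u - 1)) w
      (Function.update peb u (peb u - 1) w + 1) with hpeb₁
    set D₁ : Multiset (Finset V × V) := (f, u) ::ₘ D.erase (f, w) with hD₁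
    have hstep : ShiftStep (D, peb) (D₁, peb₁) :=
      ⟨f, w, u, hfwD, huf, hpu, rfl, rfl⟩
    have hle₁ : D₀.erase (f, w) ≤ D₁ :=
      le_trans (Multiset.erase_le_erase _ hle) (Multiset.le_cons_self _ _)
    have hpw : 1 ≤ peb₁ w := by simp [hpeb₁]
    obtain ⟨D', peb', hrt, hmap, hmono, hsum⟩ := ih D₁ peb₁ hle₁ hpw
    refine ⟨D', peb', Relation.ReflTransGen.head hstep hrt, ?_, ?_, ?_⟩
    · rw [hmap, hD₁, Multiset.map_cons]
      conv_rhs => rw [← Multiset.cons_erase hfwD]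
      rw [Multiset.map_cons]
    · intro v hv
      refine le_trans ?_ (hmono v hv)
      have hvu : v ≠ u := fun hvu => hue (hvu ▸ hv)
      by_cases hvw : v = w
      · subst hvw
        have : peb₁ v = peb v + 1 := by
          rw [hpeb₁, Function.update_self, Function.update_of_ne hvu]
        omega
      · have : peb₁ v = peb v := by
          rw [hpeb₁, Function.update_of_ne hvw, Function.update_of_ne hvu]
        omega
    · have h₁ : ∀ v ∈ e, peb₁ v = peb v + (if w = v then 1 else 0) := by
        intro v hv
        have hvu : v ≠ u := fun hvu => hue (hvu ▸ hv)
        by_cases hvw : v = w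
        · subst hvw
          rw [hpeb₁, Function.update_self, Function.update_of_ne hvu, if_pos rfl]
        · rw [hpeb₁, Function.update_of_ne hvw, Function.update_of_ne hvu,
            if_neg (fun h => hvw h.symm), Nat.add_zero]
      have h₂ : (∑ v ∈ e, peb₁ v) = (∑ v ∈ e, peb v) + (if w ∈ e then 1 else 0) := by
        rw [Finset.sum_congr rfl h₁, Finset.sum_add_distrib,
          Finset.sum_ite_eq e w (fun _ => 1)]
      rw [hsum, h₂, if_neg hue]
      by_cases hwe : w ∈ e <;> simp [hwe]

/-- If `(D, peb)` is reachable in the `(k,ℓ)`-pebble game, `e` is a nonempty vertex set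
whose addition keeps the underlying hypergraph `(k,ℓ)`-sparse, and fewer than `ℓ+1`
pebbles lie on `e`, then by pebble-shift moves only one can bring one more pebble onto
`e` without removing any pebble already on `e`. -/
theorem stmt_16 {V : Type*} [DecidableEq V] (k l : ℕ) (hk : 1 ≤ k)
    (D : Multiset (Finset V × V)) (peb : V → ℕ) (h : PebbleReach k l D peb)
    (e : Finset V) (he : e.Nonempty) (hsp : Sparse k l (e ::ₘ D.map Prod.fst))
    (hpeb : ∑ v ∈ e, peb v ≤ l) :
    ∃ (D' : Multiset (Finset V × V)) (peb' : V → ℕ),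
      Relation.ReflTransGen ShiftStep (D, peb) (D', peb') ∧
      D'.map Prod.fst = D.map Prod.fst ∧
      (∀ v ∈ e, peb v ≤ peb' v) ∧
      (∑ v ∈ e, peb' v) = (∑ v ∈ e, peb v) + 1 := by
  classical
  -- First find a reachable pebbled vertex outside `e`.
  have key : ∃ u, PathTo e D u ∧ u ∉ e ∧ 1 ≤ peb u := by
    by_contra hcon
    push_neg at hcon
    set S : Finset V := e ∪ D.toFinset.sup Prod.fst with hS
    set R : Finset V := S.filter (fun v => PathTo e D v) with hR
    have heR : e ⊆ R := by
      intro v hv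
      exact Finset.mem_filter.mpr
        ⟨Finset.mem_union_left _ hv, PathTo.base hv⟩
    have hRpath : ∀ v ∈ R, PathTo e D v := fun v hv => (Finset.mem_filter.mp hv).2
    have hclosure : ∀ p ∈ D, p.2 ∈ R → p.1 ⊆ R := by
      rintro ⟨f, w⟩ hp hw u hu
      refine Finset.mem_filter.mpr ⟨?_, pathTo_closure (hRpath _ hw) hp hu⟩
      refine Finset.mem_union_right _ ?_
      exact Finset.le_sup (f := Prod.fst) (Multiset.mem_toFinset.mpr hp) hu
    -- pebbles on R are all on e
    have hsumR : (∑ v ∈ R, peb v) = ∑ v ∈ e, peb v := by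
      symm
      apply Finset.sum_subset heR
      intro v hvR hve
      have := hcon v (hRpath v hvR) hve
      omega
    -- counting
    have hcount : (∑ v ∈ R, peb v) + (D.filter fun p => p.2 ∈ R).card = k * R.card := by
      rw [card_filter_tail, ← Finset.sum_add_distrib]
      rw [Finset.sum_congr rfl (fun v _ => peb_count h v)]
      rw [Finset.sum_const, smul_eq_mul, mul_comm]
    have hfil : (D.filter fun p => p.2 ∈ R).card = spanCount (D.map Prod.fst) R := by
      have h1 : (D.filter fun p => p.2 ∈ R) = (D.filter fun p => p.1 ⊆ R) := by
        apply Multiset.filter_congr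
        intro p hp
        constructor
        · exact fun hw => hclosure p hp hw
        · intro hsub
          exact hsub (tail_mem h p hp)
      rw [h1]
      unfold spanCount
      rw [Multiset.filter_map, Multiset.card_map]
      rfl
    -- sparsity contradiction
    have hspan1 : spanCount ((e ::ₘ D.map Prod.fst)) R
        = spanCount (D.map Prod.fst) R + 1 := by
      unfold spanCount
      rw [Multiset.filter_cons, if_pos heR]
      simp [add_comm]
    have hpos : 1 ≤ spanCount (e ::ₘ D.map Prod.fst) R := by omega
    have := hsp R hpos
    omega
  obtain ⟨u, hpath, hue, hpu⟩ := key
  obtain ⟨D', peb', hrt, hmap, hmono, hsum⟩ := shift_chain hpath D peb le_rfl hpu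
  rw [if_neg hue] at hsum
  exact ⟨D', peb', hrt, hmap, hmono, hsum⟩
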